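/- arXiv:2205.04388 — 3 statements merged into one kernel-verified Lean document; each statement's English description precedes it below -/
import Mathlib

section
/- Let d ≥ 1, m ≥ d + 1, set k = min(d+1, m−1), and let p, q : ZMod m → ℝ^d (Euclidean space) be cyclically ordered lists of points which are generic, meaning that for every j ∈ ZMod m the d+1 points p_j, p_{j+1}, …, p_{j+d} affinely span ℝ^d, and likewise for q. Then there exists an isometry f : ℝ^d → ℝ^d with f(p_j) = q_j for all j ∈ ZMod m if and only if ‖p_j − p_{j+i}‖ = ‖q_j − q_{j+i}‖ for all j ∈ ZMod m and all i ∈ {1, …, k}. -/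
open scoped RealInnerProductSpace

open AffineSubspace in
lemma aux_eq_of_dist {d : ℕ} (x y : EuclideanSpace ℝ (Fin d)) (s : Set (EuclideanSpace ℝ (Fin d)))
    (hspan : affineSpan ℝ s = ⊤) (h : ∀ z ∈ s, dist z x = dist z y) : x = y := by
  have hle : affineSpan ℝ s ≤ AffineSubspace.perpBisector x y :=
    affineSpan_le.mpr fun z hz => (mem_perpBisector_iff_dist_eq).mpr (h z hz)
  rw [hspan] at hle
  have hx : x ∈ AffineSubspace.perpBisector x y := hle trivial
  have := (mem_perpBisector_iff_dist_eq).mp hx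
  simpa [eq_comm] using this

lemma window_span {d m : ℕ} (p : ZMod m → EuclideanSpace ℝ (Fin d)) (j : ZMod m)
    (hp : affineSpan ℝ (Set.range fun i : Fin (d + 1) => p (j + ((i : ℕ) : ZMod m))) = ⊤) :
    ⊤ ≤ Submodule.span ℝ
      (Set.range fun i : Fin d => p (j + (((i : ℕ) + 1 : ℕ) : ZMod m)) - p j) := by
  set g : Fin (d + 1) → EuclideanSpace ℝ (Fin d) := fun i => p (j + ((i : ℕ) : ZMod m)) with hg
  have h0 : g 0 = p j := by simp [hg]
  have hdir : vectorSpan ℝ (Set.range g) = ⊤ := by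
    have := congrArg AffineSubspace.direction hp
    rwa [direction_affineSpan, AffineSubspace.direction_top] at this
  rw [vectorSpan_eq_span_vsub_set_right ℝ (Set.mem_range_self 0)] at hdir
  rw [← hdir]
  apply Submodule.span_le.mpr
  rintro x ⟨_, ⟨i, rfl⟩, rfl⟩
  induction i using Fin.cases with
  | zero => simp
  | succ i =>
      apply Submodule.subset_span
      refine ⟨i, ?_⟩
      simp only [vsub_eq_sub, hg, Fin.val_succ, Fin.val_zero, Nat.cast_zero, add_zero]

/-- for generic cyclically ordered lists `p, q : ZMod m → ℝ^d`
(every `d+1` cyclically consecutive points affinely span `ℝ^d`), there is an isometry of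
`ℝ^d` matching `p` with `q` (in order) iff the cyclic distance matrices coincide:
`‖p j - p (j+i)‖ = ‖q j - q (j+i)‖` for all `j ∈ ZMod m` and `1 ≤ i ≤ min (d+1) (m-1)`. -/
theorem cyclic_distance_matrix_complete (d m : ℕ) (hd : 1 ≤ d) (hm : d + 1 ≤ m)
    (p q : ZMod m → EuclideanSpace ℝ (Fin d))
    (hp : ∀ j : ZMod m,
      affineSpan ℝ (Set.range fun i : Fin (d + 1) => p (j + ((i : ℕ) : ZMod m))) = ⊤)
    (hq : ∀ j : ZMod m,
      affineSpan ℝ (Set.range fun i : Fin (d + 1) => q (j + ((i : ℕ) : ZMod m))) = ⊤) :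
    (∃ f : EuclideanSpace ℝ (Fin d) ≃ᵢ EuclideanSpace ℝ (Fin d),
      ∀ j : ZMod m, f (p j) = q j) ↔
    (∀ j : ZMod m, ∀ i : ℕ, 1 ≤ i → i ≤ min (d + 1) (m - 1) →
      ‖p j - p (j + (i : ZMod m))‖ = ‖q j - q (j + (i : ZMod m))‖) := by
  haveI : NeZero m := ⟨by omega⟩
  constructor
  · rintro ⟨f, hf⟩ j i _ _
    have := f.dist_eq (p j) (p (j + (i : ZMod m)))
    rw [dist_eq_norm, dist_eq_norm, hf, hf] at this
    exact this.symm
  · intro h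
    -- distances in natural-number indexing
    have hdist : ∀ a b : ℕ, a ≤ b → b ≤ a + min (d + 1) (m - 1) →
        dist (p (a : ZMod m)) (p (b : ZMod m)) = dist (q (a : ZMod m)) (q (b : ZMod m)) := by
      intro a b hab hbK
      rcases eq_or_lt_of_le hab with rfl | h'
      · simp
      · have h1 : 1 ≤ b - a := by omega
        have h2 : b - a ≤ min (d + 1) (m - 1) := by omega
        have hcb : ((a : ZMod m) + ((b - a : ℕ) : ZMod m)) = (b : ZMod m) := by
          rw [← Nat.cast_add]; congr 1; omega
        have := h (a : ZMod m) (b - a) h1 h2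
        rw [hcb] at this
        rwa [dist_eq_norm, dist_eq_norm]
    have hdist2 : ∀ a b : ℕ, b ≤ a + min (d + 1) (m - 1) → a ≤ b + min (d + 1) (m - 1) →
        dist (p (a : ZMod m)) (p (b : ZMod m)) = dist (q (a : ZMod m)) (q (b : ZMod m)) := by
      intro a b h1 h2
      rcases le_total a b with hab | hba
      · exact hdist a b hab h1
      · rw [dist_comm, dist_comm (q _)]; exact hdist b a hba h2
    have hKd : d ≤ min (d + 1) (m - 1) := by omega
    -- vectors
    set v : Fin d → EuclideanSpace ℝ (Fin d) :=
      fun i => p ((0 : ZMod m) + (((i : ℕ) + 1 : ℕ) : ZMod m)) - p 0 with hv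
    set w : Fin d → EuclideanSpace ℝ (Fin d) :=
      fun i => q ((0 : ZMod m) + (((i : ℕ) + 1 : ℕ) : ZMod m)) - q 0 with hw
    have hvspan : ⊤ ≤ Submodule.span ℝ (Set.range v) := window_span p 0 (hp 0)
    have hwspan : ⊤ ≤ Submodule.span ℝ (Set.range w) := window_span q 0 (hq 0)
    have hcard : Fintype.card (Fin d) = Module.finrank ℝ (EuclideanSpace ℝ (Fin d)) := by
      simp [finrank_euclideanSpace_fin]
    set bv : Module.Basis (Fin d) ℝ (EuclideanSpace ℝ (Fin d)) :=
      basisOfTopLeSpanOfCardEqFinrank v hvspan hcard with hbv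
    set bw : Module.Basis (Fin d) ℝ (EuclideanSpace ℝ (Fin d)) :=
      basisOfTopLeSpanOfCardEqFinrank w hwspan hcard with hbw
    have hbv' : ∀ i, bv i = v i := fun i => by
      rw [hbv, coe_basisOfTopLeSpanOfCardEqFinrank]
    have hbw' : ∀ i, bw i = w i := fun i => by
      rw [hbw, coe_basisOfTopLeSpanOfCardEqFinrank]
    set T : EuclideanSpace ℝ (Fin d) ≃ₗ[ℝ] EuclideanSpace ℝ (Fin d) :=
      bv.equiv bw (Equiv.refl _) with hT
    have hTv : ∀ i, T (v i) = w i := fun i => by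
      rw [← hbv' i, hT, Module.Basis.equiv_apply, Equiv.refl_apply, hbw']
    -- norms of v and w
    have hvn : ∀ i : Fin d, ‖v i‖ = ‖w i‖ := by
      intro i
      have := hdist 0 ((i : ℕ) + 1) (by omega) (by have := i.isLt; omega)
      simp only [Nat.cast_zero] at this
      rw [hv, hw]
      simp only [zero_add]
      rw [← neg_sub (p _), ← neg_sub (q _), norm_neg, norm_neg, ← dist_eq_norm, ← dist_eq_norm]
      simpa [dist_comm] using this
    have hvsub : ∀ i j : Fin d, ‖v i - v j‖ = ‖w i - w j‖ := by
      intro i j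
      have h1 := i.isLt; have h2 := j.isLt
      have := hdist2 ((i : ℕ) + 1) ((j : ℕ) + 1) (by omega) (by omega)
      rw [hv, hw]
      simp only [zero_add, sub_sub_sub_cancel_right]
      rw [← dist_eq_norm, ← dist_eq_norm]
      exact this
    -- inner products agree
    have hinner : ∀ x y : EuclideanSpace ℝ (Fin d),
        (inner ℝ (T x) (T y) : ℝ) = inner ℝ x y := by
      have key : ∀ x y x' y' : EuclideanSpace ℝ (Fin d), ‖x‖ = ‖x'‖ → ‖y‖ = ‖y'‖ →
          ‖x - y‖ = ‖x' - y'‖ → (inner ℝ x y : ℝ) = inner ℝ x' y' := by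
        intro x y x' y' e1 e2 e3
        have n1 := norm_sub_sq_real x y
        have n2 := norm_sub_sq_real x' y'
        rw [e1, e2, e3] at n1
        linarith
      have hB : ((innerₗ _ :
            LinearMap.BilinForm ℝ (EuclideanSpace ℝ (Fin d))).compl₁₂
            (T : EuclideanSpace ℝ (Fin d) →ₗ[ℝ] EuclideanSpace ℝ (Fin d))
            (T : EuclideanSpace ℝ (Fin d) →ₗ[ℝ] EuclideanSpace ℝ (Fin d))) =
          innerₗ _ := by
        apply LinearMap.ext_basis bv bv
        intro i j
        simp only [LinearMap.compl₁₂_apply, LinearEquiv.coe_coe]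
        rw [hbv' i, hbv' j, hTv, hTv]
        simp only [innerₗ_apply_apply]
        exact key _ _ _ _ (hvn i).symm (hvn j).symm (hvsub i j).symm
      intro x y
      simpa [innerₗ_apply_apply] using congrArg (fun B => B x y) hB
    set Tiso : EuclideanSpace ℝ (Fin d) ≃ₗᵢ[ℝ] EuclideanSpace ℝ (Fin d) :=
      T.isometryOfInner hinner with hTiso
    set f : EuclideanSpace ℝ (Fin d) ≃ᵢ EuclideanSpace ℝ (Fin d) :=
      ((IsometryEquiv.addRight (-(p 0))).trans Tiso.toIsometryEquiv).trans
        (IsometryEquiv.addRight (q 0)) with hfdef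
    have hf : ∀ x, f x = T (x - p 0) + q 0 := by
      intro x
      simp [hfdef, hTiso, sub_eq_add_neg]
    refine ⟨f, ?_⟩
    -- base window
    have hbase : ∀ a : ℕ, a ≤ d → f (p (a : ZMod m)) = q (a : ZMod m) := by
      intro a ha
      rcases Nat.eq_zero_or_pos a with rfl | hpos
      · rw [hf]; simp
      · set i : Fin d := ⟨a - 1, by omega⟩ with hi
        have hai : ((i : ℕ) + 1) = a := by simp [hi]; omega
        rw [hf]
        have : p (a : ZMod m) - p 0 = v i := by rw [hv]; simp only [zero_add, hai]
        rw [this, hTv, hw]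
        simp only [zero_add, hai]
        abel
    have hmain : ∀ n : ℕ, n < m → f (p (n : ZMod m)) = q (n : ZMod m) := by
      intro n
      induction n using Nat.strong_induction_on with
      | _ n IH =>
        intro hnm
        by_cases hnd : n ≤ d
        · exact hbase n hnd
        · have hK : min (d + 1) (m - 1) = d + 1 := by omega
          set j := n - (d + 1) with hj
          apply aux_eq_of_dist _ _
            (Set.range fun i : Fin (d + 1) => q ((j : ZMod m) + ((i : ℕ) : ZMod m)))
            (hq (j : ZMod m))
          rintro z ⟨a, rfl⟩
          have hcast : ((j : ZMod m) + ((a : ℕ) : ZMod m)) = ((j + (a : ℕ) : ℕ) : ZMod m) := by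
            push_cast; ring
          have ha := a.isLt
          have h1 : f (p ((j + (a : ℕ) : ℕ) : ZMod m)) = q ((j + (a : ℕ) : ℕ) : ZMod m) :=
            IH (j + (a : ℕ)) (by omega) (by omega)
          change dist (q ((j : ZMod m) + ((a : ℕ) : ZMod m))) (f (p (n : ZMod m))) =
            dist (q ((j : ZMod m) + ((a : ℕ) : ZMod m))) (q (n : ZMod m))
          rw [hcast]
          calc dist (q ((j + (a : ℕ) : ℕ) : ZMod m)) (f (p (n : ZMod m)))
              = dist (f (p ((j + (a : ℕ) : ℕ) : ZMod m))) (f (p (n : ZMod m))) := by rw [h1]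
            _ = dist (p ((j + (a : ℕ) : ℕ) : ZMod m)) (p (n : ZMod m)) := f.dist_eq _ _
            _ = dist (q ((j + (a : ℕ) : ℕ) : ZMod m)) (q (n : ZMod m)) :=
                hdist (j + (a : ℕ)) n (by omega) (by omega)
    intro jz
    obtain ⟨n, rfl⟩ := ZMod.natCast_zmod_surjective jz
    have : ((n : ZMod m)) = ((n % m : ℕ) : ZMod m) := (ZMod.natCast_mod n m).symm
    rw [this]
    exact hmain (n % m) (Nat.mod_lt _ (by omega))
end

section
/- Let d ≥ 1 and let S, Q ⊆ ℝ × ℝ^d be high-dimensional periodic sequences with m-point motifs p and q and minimal periods l and l', such that the value projections v(p_0), …, v(p_{m−1}) affinely span ℝ^d and likewise v(q_0), …, v(q_{m−1}) affinely span ℝ^d. Then there exist a ∈ ℝ and an isometry g : ℝ^d → ℝ^d with Q = {(t + a, g(x)) : (t,x) ∈ S} if and only if l = l' and there exists s ∈ ZMod m such that DL(Q)_j = DL(S)_{j+s} for all j ∈ ZMod m and ‖v(q_j) − v(q_{j+i})‖ = ‖v(p_{j+s}) − v(p_{j+s+i})‖ for all j ∈ ZMod m and all i ∈ {1, …, m−1}.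 In other words, the time-value invariant TVI (the time distance list together with the full cyclic distance matrix of the value projection, considered up to a common cyclic permutation) is a complete invariant of such sequences up to the equivalence f×g of Definition of high-dimensional periodic sequences. -/
/-- A high-dimensional periodic sequence in `ℝ × ℝ^d`: a period `l > 0` and a motif
`p : Fin m → ℝ × ℝ^d` with strictly increasing time coordinates in `[0, l)`, giving the set
`{p i + j·l·e₁ : i ∈ Fin m, j ∈ ℤ}`. -/
structure HSeq (d m : ℕ) where
  m_pos : 0 < m
  l : ℝ
  l_pos : 0 < l
  p : Fin m → ℝ × EuclideanSpace ℝ (Fin d)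
  t_strict : StrictMono fun i => (p i).1
  t0_nonneg : 0 ≤ (p ⟨0, m_pos⟩).1
  t_lt : ∀ i, (p i).1 < l

namespace HSeq

variable {d m : ℕ}

/-- The point set `{p i + j·l·e₁ : i ∈ Fin m, j ∈ ℤ}` of the sequence. -/
def pts (S : HSeq d m) : Set (ℝ × EuclideanSpace ℝ (Fin d)) :=
  {x | ∃ (i : Fin m) (j : ℤ), x = ((S.p i).1 + S.l * j, (S.p i).2)}

/-- The time projection `t(S) ⊆ ℝ` of the point set. -/
def tpts (S : HSeq d m) : Set ℝ :=
  {r | ∃ (i : Fin m) (j : ℤ), r = (S.p i).1 + S.l * j}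

/-- The period is minimal: the same set of points cannot be produced with a smaller period. -/
def IsMinimal (S : HSeq d m) : Prop :=
  ∀ (m' : ℕ) (T : HSeq d m'), T.pts = S.pts → S.l ≤ T.l

/-- The time distance list `DL`, indexed by `ZMod m`. -/
noncomputable def DL (S : HSeq d m) : ZMod m → ℝ := fun i =>
  letI : NeZero m := ⟨S.m_pos.ne'⟩
  if h : i.val + 1 < m then (S.p ⟨i.val + 1, h⟩).1 - (S.p ⟨i.val, i.val_lt⟩).1
  else (S.p ⟨0, S.m_pos⟩).1 + S.l - (S.p ⟨i.val, i.val_lt⟩).1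

/-- The time distance list of the multiple `(n/m)S` with `m ∣ n`: the `(n/m)`-fold
concatenation of `DL S`. -/
noncomputable def DLc (S : HSeq d m) (n : ℕ) : ZMod n → ℝ :=
  fun i => S.DL ((i.val : ZMod m))

/-- The value projection of the motif of the multiple `(n/m)S` with `m ∣ n`,
indexed by `ZMod n`. -/
def vproj (S : HSeq d m) (n : ℕ) : ZMod n → EuclideanSpace ℝ (Fin d) :=
  fun i => (S.p ⟨i.val % m, Nat.mod_lt _ S.m_pos⟩).2

/-- The oriented elastic metric for high-dimensional periodic sequences:
`Elm^o(S,Q) = min_{s ∈ ZMod n} max {d_t(s), d_v(s)}` with `n = lcm(m₁,m₂)`, where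
`d_t(s) = max_j |DL(S')_j - DL(Q')_{j+s}|` and `d_v(s)` is the max over rows
`i ∈ {1,…,n-1}` and columns `j ∈ ZMod n` of `|d_{ij}(S') - d_{i,j+s}(Q')|`
for the cyclic distance matrices of the value projections of the multiples
`S' = (n/m₁)S`, `Q' = (n/m₂)Q`. -/
noncomputable def Elmo {m₁ m₂ : ℕ} (S : HSeq d m₁) (Q : HSeq d m₂) : ℝ :=
  letI : NeZero (Nat.lcm m₁ m₂) := ⟨(Nat.lcm_pos S.m_pos Q.m_pos).ne'⟩
  Finset.univ.inf' (Finset.univ_nonempty_iff.mpr ⟨0⟩)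
    fun s : ZMod (Nat.lcm m₁ m₂) =>
      max
        (Finset.univ.sup' (Finset.univ_nonempty_iff.mpr ⟨0⟩)
          fun j : ZMod (Nat.lcm m₁ m₂) =>
            |S.DLc (Nat.lcm m₁ m₂) j - Q.DLc (Nat.lcm m₁ m₂) (j + s)|)
        ((((Finset.Icc 1 (Nat.lcm m₁ m₂ - 1) ×ˢ
            (Finset.univ : Finset (ZMod (Nat.lcm m₁ m₂)))).sup
          fun x : ℕ × ZMod (Nat.lcm m₁ m₂) =>
            Real.nnabs
              (‖S.vproj (Nat.lcm m₁ m₂) x.2 -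
                  S.vproj (Nat.lcm m₁ m₂) ((x.1 : ZMod (Nat.lcm m₁ m₂)) + x.2)‖ -
                ‖Q.vproj (Nat.lcm m₁ m₂) (x.2 + s) -
                  Q.vproj (Nat.lcm m₁ m₂) ((x.1 : ZMod (Nat.lcm m₁ m₂)) + x.2 + s)‖)) : NNReal) : ℝ)

end HSeq


namespace HSeqAux

theorem sub_const_of_succ {f g : ℤ → ℝ} (h : ∀ k, f (k + 1) - f k = g (k + 1) - g k) :
    ∀ k, f k - g k = f 0 - g 0 := by
  intro k
  induction k using Int.induction_on with
  | zero => rfl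
  | succ n ih => have := h n; push_cast at *; linarith
  | pred n ih =>
    have hh := h (-(n : ℤ) - 1)
    rw [show (-(n : ℤ) - 1 + 1) = -(n : ℤ) by ring] at hh
    linarith

theorem strictMono_surj_int {φ : ℤ → ℤ} (h1 : StrictMono φ) (h2 : Function.Surjective φ) :
    ∀ k, φ k = k + φ 0 := by
  have step : ∀ k, φ (k + 1) = φ k + 1 := by
    intro k
    obtain ⟨k0, hk0⟩ := h2 (φ k + 1)
    have hlt : k < k0 := h1.lt_iff_lt.mp (by omega)
    have h3 : φ k < φ (k + 1) := h1 (lt_add_one k)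
    rcases lt_trichotomy k0 (k + 1) with hc | hc | hc
    · have : φ k0 ≤ φ k := h1.monotone (by omega)
      omega
    · subst hc; exact hk0
    · have : φ (k + 1) < φ k0 := h1 (by omega)
      omega
  intro k
  induction k using Int.induction_on with
  | zero => ring
  | succ n ih => rw [step]; omega
  | pred n ih =>
    have hh := step (-(n : ℤ) - 1)
    rw [show (-(n : ℤ) - 1 + 1) = -(n : ℤ) by ring] at hh
    omega

end HSeqAux

namespace HSeq

variable {d m : ℕ}

/-- The motif index of the `k`-th point. -/
def idx (S : HSeq d m) (k : ℤ) : Fin m :=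
  ⟨(k % (m : ℤ)).toNat, by
    have hm : (0 : ℤ) < m := Int.natCast_pos.mpr S.m_pos
    have h1 := Int.emod_nonneg k hm.ne'
    have h2 := Int.emod_lt_of_pos k hm
    omega⟩

/-- The time of the `k`-th point. -/
noncomputable def tk (S : HSeq d m) (k : ℤ) : ℝ :=
  (S.p (S.idx k)).1 + S.l * ((k / (m : ℤ) : ℤ) : ℝ)

/-- The value of the `k`-th point. -/
def vk (S : HSeq d m) (k : ℤ) : EuclideanSpace ℝ (Fin d) :=
  (S.p (S.idx k)).2

theorem pts_eq_range (S : HSeq d m) : S.pts = Set.range fun k : ℤ => (S.tk k, S.vk k) := by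
  have hm : (0 : ℤ) < m := Int.natCast_pos.mpr S.m_pos
  ext x
  constructor
  · rintro ⟨i, j, rfl⟩
    refine ⟨(i : ℤ) + j * m, ?_⟩
    have hidx : S.idx ((i : ℤ) + j * m) = i := by
      have h1 : ((i : ℤ) + j * m) % m = i := by
        rw [Int.add_mul_emod_self_right]
        exact Int.emod_eq_of_lt (by positivity) (by exact_mod_cast i.isLt)
      apply Fin.ext
      show ((((i : ℤ) + j * m) % m).toNat) = (i : ℕ)
      omega
    have hdiv : ((i : ℤ) + j * m) / m = j := by
      rw [Int.add_mul_ediv_right _ _ hm.ne', Int.ediv_eq_zero_of_lt (by positivity)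
        (by exact_mod_cast i.isLt), zero_add]
    simp only [tk, vk, hidx, hdiv]
  · rintro ⟨k, rfl⟩
    exact ⟨S.idx k, k / m, by simp only [tk, vk]⟩

theorem idx_val (S : HSeq d m) (k : ℤ) :
    letI : NeZero m := ⟨S.m_pos.ne'⟩
    ((S.idx k : Fin m) : ℕ) = ((k : ZMod m)).val := by
  letI : NeZero m := ⟨S.m_pos.ne'⟩
  have h := ZMod.val_intCast (n := m) k
  show ((k % (m : ℤ)).toNat) = ((k : ZMod m)).val
  omega

theorem vk_eq_vproj (S : HSeq d m) (k : ℤ) : S.vk k = S.vproj m ((k : ZMod m)) := by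
  letI : NeZero m := ⟨S.m_pos.ne'⟩
  have h := S.idx_val k
  have hlt : ((k : ZMod m)).val < m := ZMod.val_lt _
  have hfin : S.idx k = (⟨((k : ZMod m)).val % m, Nat.mod_lt _ S.m_pos⟩ : Fin m) := by
    apply Fin.ext
    show ((S.idx k : Fin m) : ℕ) = ((k : ZMod m)).val % m
    rw [Nat.mod_eq_of_lt hlt]
    exact h
  simp only [vk, vproj, hfin]

theorem tk_succ (S : HSeq d m) (k : ℤ) : S.tk (k + 1) = S.tk k + S.DL ((k : ZMod m)) := by
  letI : NeZero m := ⟨S.m_pos.ne'⟩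
  have hm : (0 : ℤ) < m := Int.natCast_pos.mpr S.m_pos
  have hval : ((((k : ZMod m)).val : ℤ)) = k % m := ZMod.val_intCast k
  have hval1 : ((((k + 1 : ℤ) : ZMod m)).val : ℤ) = (k + 1) % m := ZMod.val_intCast (k + 1)
  have hidxk : S.idx k = ⟨((k : ZMod m)).val, ZMod.val_lt _⟩ := by
    apply Fin.ext
    show ((S.idx k : Fin m) : ℕ) = ((k : ZMod m)).val
    exact S.idx_val k
  simp only [DL]
  by_cases h : ((k : ZMod m)).val + 1 < m
  · rw [dif_pos h]
    have hdm : (k + 1) / m = k / m ∧ (k + 1) % m = k % m + 1 :=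
      (Int.ediv_emod_unique hm).mpr ⟨by have := Int.mul_ediv_add_emod k m; omega,
        by have := Int.emod_nonneg k hm.ne'; omega, by omega⟩
    have hidx1 : S.idx (k + 1) = ⟨((k : ZMod m)).val + 1, h⟩ := by
      apply Fin.ext
      show ((S.idx (k + 1) : Fin m) : ℕ) = ((k : ZMod m)).val + 1
      have h1 := S.idx_val (k + 1)
      have h2 := hdm.2
      omega
    rw [tk, tk, hidx1, hidxk, hdm.1]
    ring
  · rw [dif_neg h]
    have hvm : ((((k : ZMod m)).val : ℤ)) = (m : ℤ) - 1 := by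
      have := ZMod.val_lt (((k : ZMod m))); omega
    have hdm : (k + 1) / m = k / m + 1 ∧ (k + 1) % m = 0 :=
      (Int.ediv_emod_unique hm).mpr ⟨by
        have h1 := Int.mul_ediv_add_emod k m
        have h2 : (m : ℤ) * (k / ↑m + 1) = ↑m * (k / ↑m) + ↑m := by ring
        omega,
        le_refl 0, hm⟩
    have hidx1 : S.idx (k + 1) = ⟨0, S.m_pos⟩ := by
      apply Fin.ext
      show ((S.idx (k + 1) : Fin m) : ℕ) = 0
      have h1 := S.idx_val (k + 1)
      have h2 := hdm.2
      omega
    rw [tk, tk, hidx1, hidxk, hdm.1]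
    push_cast
    ring

theorem tk_add_m (S : HSeq d m) (k : ℤ) : S.tk (k + m) = S.tk k + S.l := by
  have hm : (0 : ℤ) < m := Int.natCast_pos.mpr S.m_pos
  have hidx : S.idx (k + m) = S.idx k := by
    apply Fin.ext
    show (((k + (m : ℤ)) % m).toNat) = ((k % (m : ℤ)).toNat)
    have h1 : (k + (m : ℤ)) % m = k % m := by
      conv_lhs => rw [show k + (m : ℤ) = k + 1 * m by ring]
      rw [Int.add_mul_emod_self_right]
    omega
  have hdiv : (k + m) / m = k / m + 1 := by
    conv_lhs => rw [show k + (m : ℤ) = k + 1 * m by ring]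
    rw [Int.add_mul_ediv_right _ _ hm.ne']
  rw [tk, tk, hidx, hdiv]
  push_cast
  ring

theorem DL_pos (S : HSeq d m) (j : ZMod m) : 0 < S.DL j := by
  letI : NeZero m := ⟨S.m_pos.ne'⟩
  simp only [DL]
  split
  · next h =>
    have := S.t_strict (show (⟨j.val, j.val_lt⟩ : Fin m) < ⟨j.val + 1, h⟩ by
      simp [Fin.lt_def])
    linarith
  · have h1 := S.t_lt ⟨j.val, j.val_lt⟩
    have h2 := S.t0_nonneg
    linarith

theorem tk_strictMono (S : HSeq d m) : StrictMono S.tk :=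
  strictMono_int_of_lt_succ fun k => by
    rw [S.tk_succ k]
    have := S.DL_pos ((k : ZMod m))
    linarith

end HSeq



open RealInnerProductSpace in
theorem rigidity_aux {d : ℕ} {ι : Type*} (f g : ι → EuclideanSpace ℝ (Fin d)) (i0 : ι)
    (hspan : Submodule.span ℝ (Set.range fun i => f i - f i0) = ⊤)
    (hd : ∀ i j, ‖g i - g j‖ = ‖f i - f j‖) :
    ∃ e : EuclideanSpace ℝ (Fin d) ≃ᵢ EuclideanSpace ℝ (Fin d), ∀ i, e (f i) = g i := by
  set F : ι → EuclideanSpace ℝ (Fin d) := fun i => f i - f i0 with hF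
  set G : ι → EuclideanSpace ℝ (Fin d) := fun i => g i - g i0 with hG
  have hFG : ∀ i j, ⟪G i, G j⟫ = ⟪F i, F j⟫ := by
    intro i j
    have h1 : ‖G i‖ = ‖F i‖ := hd i i0
    have h2 : ‖G j‖ = ‖F j‖ := hd j i0
    have h3 : ‖G i - G j‖ = ‖F i - F j‖ := by
      simpa [hF, hG, sub_sub_sub_cancel_right] using hd i j
    have e1 := norm_sub_sq_real (G i) (G j)
    have e2 := norm_sub_sq_real (F i) (F j)
    rw [h1, h2, h3] at e1
    linarith
  set ψ : (ι →₀ ℝ) →ₗ[ℝ] EuclideanSpace ℝ (Fin d) := Finsupp.linearCombination ℝ F with hψdef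
  set φ : (ι →₀ ℝ) →ₗ[ℝ] EuclideanSpace ℝ (Fin d) := Finsupp.linearCombination ℝ G with hφdef
  have hψ : Function.Surjective ψ := by
    rw [← LinearMap.range_eq_top, hψdef, Finsupp.range_linearCombination]
    exact hspan
  have key : ∀ c c' : ι →₀ ℝ, ⟪φ c, φ c'⟫ = ⟪ψ c, ψ c'⟫ := by
    intro c c'
    simp only [hψdef, hφdef, Finsupp.linearCombination_apply, Finsupp.sum, sum_inner,
      inner_sum, real_inner_smul_left, real_inner_smul_right]
    refine Finset.sum_congr rfl fun i _ => Finset.sum_congr rfl fun j _ => ?_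
    rw [hFG]
  have hker : LinearMap.ker ψ ≤ LinearMap.ker φ := by
    intro c hc
    rw [LinearMap.mem_ker] at hc ⊢
    have h := key c c
    rw [hc, inner_zero_left] at h
    exact inner_self_eq_zero.mp h
  set E := ψ.quotKerEquivOfSurjective hψ with hE
  set T : EuclideanSpace ℝ (Fin d) →ₗ[ℝ] EuclideanSpace ℝ (Fin d) := ((LinearMap.ker ψ).liftQ φ hker).comp (E.symm : EuclideanSpace ℝ (Fin d) →ₗ[ℝ] _) with hTdef
  have hT : ∀ c, T (ψ c) = φ c := by
    intro c
    have h1 : E.symm (ψ c) = Submodule.Quotient.mk c := by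
      apply E.injective
      rw [E.apply_symm_apply]
      simp [hE, LinearMap.quotKerEquivOfSurjective]
    simp [hTdef, h1, Submodule.liftQ_apply]
  have hTinner : ∀ x y : EuclideanSpace ℝ (Fin d), ⟪T x, T y⟫ = ⟪x, y⟫ := by
    intro x y
    obtain ⟨cx, rfl⟩ := hψ x
    obtain ⟨cy, rfl⟩ := hψ y
    rw [hT, hT, key]
  set E2 := (T.isometryOfInner hTinner).toLinearIsometryEquiv rfl with hE2
  refine ⟨(IsometryEquiv.vaddConst (-(f i0))).trans
    (E2.toIsometryEquiv.trans (IsometryEquiv.vaddConst (g i0))), fun i => ?_⟩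
  have h1 : T (F i) = G i := by
    have := hT (Finsupp.single i 1)
    simpa [hψdef, hφdef, Finsupp.linearCombination_single] using this
  have h2 : E2 (F i) = G i := by
    rw [hE2]
    simpa [LinearIsometry.toLinearIsometryEquiv, LinearMap.coe_isometryOfInner] using h1
  simp only [IsometryEquiv.trans_apply, IsometryEquiv.vaddConst_apply,
    LinearIsometryEquiv.coe_toIsometryEquiv]
  have h3 : f i +ᵥ -f i0 = F i := by show f i + -f i0 = f i - f i0; abel
  rw [h3, h2]
  show g i - g i0 + g i0 = g i
  abel

/-- the time-value invariant TVI (the time distance list together with the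
full cyclic distance matrix of the value projection, up to a common cyclic permutation)
is a complete invariant of high-dimensional periodic sequences (with affinely spanning
value motifs) up to the equivalence `f × g`, where `f` is a translation of the time line
and `g` is an isometry of `ℝ^d`. -/
theorem TVI_complete {d m : ℕ} (hd : 1 ≤ d) (S Q : HSeq d m)
    (hS : S.IsMinimal) (hQ : Q.IsMinimal)
    (hpspan : affineSpan ℝ (Set.range fun i : Fin m => (S.p i).2) = ⊤)
    (hqspan : affineSpan ℝ (Set.range fun i : Fin m => (Q.p i).2) = ⊤) :
    (∃ (a : ℝ) (g : EuclideanSpace ℝ (Fin d) ≃ᵢ EuclideanSpace ℝ (Fin d)),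
      Q.pts = (fun x : ℝ × EuclideanSpace ℝ (Fin d) => (x.1 + a, g x.2)) '' S.pts) ↔
    (S.l = Q.l ∧ ∃ s : ZMod m,
      (∀ j : ZMod m, Q.DL j = S.DL (j + s)) ∧
      (∀ j : ZMod m, ∀ i : ℕ, 1 ≤ i → i ≤ m - 1 →
        ‖Q.vproj m j - Q.vproj m (j + (i : ZMod m))‖ =
          ‖S.vproj m (j + s) - S.vproj m (j + s + (i : ZMod m))‖)) := by
  letI : NeZero m := ⟨S.m_pos.ne'⟩
  constructor
  · rintro ⟨a, g, h⟩
    have hQr := Q.pts_eq_range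
    have hSr := S.pts_eq_range
    have hmem : ∀ k : ℤ, ∃ k' : ℤ,
        (Q.tk k, Q.vk k) = ((S.tk k' + a : ℝ), g (S.vk k')) := by
      intro k
      have hk : (Q.tk k, Q.vk k) ∈ Q.pts := by rw [hQr]; exact ⟨k, rfl⟩
      rw [h, hSr] at hk
      obtain ⟨x, ⟨k', rfl⟩, hx⟩ := hk
      exact ⟨k', hx.symm⟩
    choose φ hφ using hmem
    have htime : ∀ k, Q.tk k = S.tk (φ k) + a := fun k => congrArg Prod.fst (hφ k)
    have hvalv : ∀ k, Q.vk k = g (S.vk (φ k)) := fun k => congrArg Prod.snd (hφ k)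
    have hmono : StrictMono φ := by
      intro k k' hk
      have h2 := Q.tk_strictMono hk
      rw [htime k, htime k'] at h2
      exact S.tk_strictMono.lt_iff_lt.mp (by linarith)
    have hsurj : Function.Surjective φ := by
      intro k'
      have hmem2 : ((S.tk k' + a : ℝ), g (S.vk k')) ∈ Q.pts := by
        rw [h]
        exact ⟨(S.tk k', S.vk k'), by rw [hSr]; exact ⟨k', rfl⟩, rfl⟩
      rw [hQr] at hmem2
      obtain ⟨k, hk⟩ := hmem2
      refine ⟨k, ?_⟩
      have h1 : Q.tk k = S.tk k' + a := congrArg Prod.fst hk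
      have h2 := htime k
      exact S.tk_strictMono.injective (by linarith)
    have hφk : ∀ k, φ k = k + φ 0 := HSeqAux.strictMono_surj_int hmono hsurj
    set c := φ 0 with hc
    have hl : S.l = Q.l := by
      have e1 : Q.tk (m : ℤ) = Q.tk 0 + Q.l := by simpa using Q.tk_add_m 0
      have e2 : Q.tk (m : ℤ) = S.tk ((m : ℤ) + c) + a := by rw [htime, hφk]
      have e3 : Q.tk 0 = S.tk (0 + c) + a := by rw [htime, hφk]
      have e4 : S.tk ((m : ℤ) + c) = S.tk (0 + c) + S.l := by
        rw [show (m : ℤ) + c = (0 + c) + m by ring]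
        exact S.tk_add_m _
      linarith
    refine ⟨hl, ((c : ZMod m)), ?_, ?_⟩
    · intro j
      have hkj : (((j.val : ℤ)) : ZMod m) = j := by
        push_cast
        rw [ZMod.natCast_val, ZMod.cast_id]
      have t1 := Q.tk_succ (j.val : ℤ)
      have t2 := S.tk_succ ((j.val : ℤ) + c)
      have e1 := htime ((j.val : ℤ))
      rw [hφk] at e1
      have e2 := htime ((j.val : ℤ) + 1)
      rw [hφk, show (j.val : ℤ) + 1 + c = (j.val : ℤ) + c + 1 by ring] at e2
      have hDLeq : Q.DL (((j.val : ℤ) : ZMod m)) =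
          S.DL ((((j.val : ℤ) + c : ℤ) : ZMod m)) := by linarith
      rw [hkj] at hDLeq
      rw [hDLeq]
      congr 1
      push_cast
      rw [ZMod.natCast_val, ZMod.cast_id]
    · intro j i hi1 him
      have hk1 : (((j.val : ℤ)) : ZMod m) = j := by
        push_cast; rw [ZMod.natCast_val, ZMod.cast_id]
      have hk2 : ((((j + (i : ZMod m)).val : ℤ)) : ZMod m) = j + (i : ZMod m) := by
        push_cast; rw [ZMod.natCast_val, ZMod.cast_id]
      have v1 : Q.vproj m j = Q.vk (j.val : ℤ) := by rw [Q.vk_eq_vproj, hk1]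
      have v2 : Q.vproj m (j + (i : ZMod m)) = Q.vk ((j + (i : ZMod m)).val : ℤ) := by
        rw [Q.vk_eq_vproj, hk2]
      rw [v1, v2, hvalv, hvalv, hφk, hφk, ← dist_eq_norm, IsometryEquiv.dist_eq,
        dist_eq_norm, S.vk_eq_vproj, S.vk_eq_vproj]
      have c1 : ((((j.val : ℤ) + c : ℤ)) : ZMod m) = j + ((c : ZMod m)) := by
        rw [Int.cast_add, hk1]
      have c2 : (((((j + (i : ZMod m)).val : ℤ) + c : ℤ)) : ZMod m) =
          j + (i : ZMod m) + ((c : ZMod m)) := by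
        rw [Int.cast_add, hk2]
      rw [c1, c2, add_right_comm]
  · rintro ⟨hl, s, hDL, hdist⟩
    -- pairwise distances over all of ZMod m
    have hv : ∀ j j' : ZMod m,
        ‖Q.vproj m j - Q.vproj m j'‖ = ‖S.vproj m (j + s) - S.vproj m (j' + s)‖ := by
      intro j j'
      by_cases hjj : j = j'
      · subst hjj; simp
      · have hne : j' - j ≠ 0 := sub_ne_zero.mpr (Ne.symm hjj)
        have hi0 : (j' - j).val ≠ 0 := fun h0 => hne ((ZMod.val_eq_zero _).mp h0)
        have hilt : (j' - j).val < m := ZMod.val_lt _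
        have hicast : (((j' - j).val : ℕ) : ZMod m) = j' - j := by
          rw [ZMod.natCast_val, ZMod.cast_id]
        have hh := hdist j (j' - j).val (Nat.one_le_iff_ne_zero.mpr hi0) (by omega)
        rw [hicast, show j + (j' - j) = j' by ring,
          show j + s + (j' - j) = j' + s by ring] at hh
        exact hh
    -- build isometry via rigidity
    have hrange : (Set.range fun j : ZMod m => S.vproj m (j + s)) =
        Set.range (fun i : Fin m => (S.p i).2) := by
      ext x
      constructor
      · rintro ⟨j, rfl⟩
        exact ⟨⟨(j + s).val % m, Nat.mod_lt _ S.m_pos⟩, rfl⟩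
      · rintro ⟨i, rfl⟩
        refine ⟨((i : ℕ) : ZMod m) - s, ?_⟩
        show S.vproj m (((i : ℕ) : ZMod m) - s + s) = _
        rw [sub_add_cancel]
        simp only [HSeq.vproj]
        have hfin : (⟨((((i : ℕ) : ZMod m)).val) % m, Nat.mod_lt _ S.m_pos⟩ : Fin m) = i := by
          apply Fin.ext
          show (((i : ℕ) : ZMod m)).val % m = (i : ℕ)
          rw [ZMod.val_natCast_of_lt i.isLt, Nat.mod_eq_of_lt i.isLt]
        rw [hfin]
    have hvspan : vectorSpan ℝ (Set.range fun j : ZMod m => S.vproj m (j + s)) = ⊤ := by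
      rw [hrange, ← direction_affineSpan, hpspan,
        AffineSubspace.direction_top]
    have hspan2 : Submodule.span ℝ
        (Set.range fun j : ZMod m => S.vproj m (j + s) - S.vproj m ((0 : ZMod m) + s)) = ⊤ := by
      rw [← hvspan, vectorSpan_range_eq_span_range_vsub_right ℝ
        (fun j : ZMod m => S.vproj m (j + s)) 0]
      rfl
    obtain ⟨e, he⟩ := rigidity_aux (fun j : ZMod m => S.vproj m (j + s))
      (fun j : ZMod m => Q.vproj m j) 0 hspan2 hv
    refine ⟨Q.tk 0 - S.tk ((s.val : ℤ)), e, ?_⟩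
    have hcast : ∀ k : ℤ, (((k + (s.val : ℤ) : ℤ)) : ZMod m) = ((k : ZMod m)) + s := by
      intro k
      push_cast
      rw [ZMod.natCast_val, ZMod.cast_id]
    have htk : ∀ k : ℤ, Q.tk k - S.tk (k + (s.val : ℤ)) =
        Q.tk 0 - S.tk ((s.val : ℤ)) := by
      have hstep : ∀ k : ℤ, Q.tk (k + 1) - Q.tk k =
          (fun k => S.tk (k + (s.val : ℤ))) (k + 1) - (fun k => S.tk (k + (s.val : ℤ))) k := by
        intro k
        simp only
        rw [show k + 1 + (s.val : ℤ) = (k + (s.val : ℤ)) + 1 by ring, Q.tk_succ, S.tk_succ,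
          hcast k, hDL ((k : ZMod m))]
        ring
      have := HSeqAux.sub_const_of_succ (f := Q.tk) (g := fun k => S.tk (k + (s.val : ℤ))) hstep
      intro k
      have hk := this k
      rwa [zero_add] at hk
    have key : ∀ k : ℤ, (Q.tk k, Q.vk k) =
        ((S.tk (k + (s.val : ℤ)) + (Q.tk 0 - S.tk ((s.val : ℤ))) : ℝ),
          e (S.vk (k + (s.val : ℤ)))) := by
      intro k
      have hv' : Q.vk k = e (S.vk (k + (s.val : ℤ))) := by
        rw [Q.vk_eq_vproj, S.vk_eq_vproj, hcast k]
        exact (he ((k : ZMod m))).symm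
      have ht' : Q.tk k = S.tk (k + (s.val : ℤ)) + (Q.tk 0 - S.tk ((s.val : ℤ))) := by
        have := htk k
        linarith
      rw [Prod.ext_iff]
      exact ⟨ht', hv'⟩
    rw [Q.pts_eq_range, S.pts_eq_range]
    ext x
    simp only [Set.mem_range, Set.mem_image]
    constructor
    · rintro ⟨k, rfl⟩
      exact ⟨(S.tk (k + (s.val : ℤ)), S.vk (k + (s.val : ℤ))),
        ⟨k + (s.val : ℤ), rfl⟩, (key k).symm⟩
    · rintro ⟨y, ⟨k', rfl⟩, rfl⟩
      refine ⟨k' - (s.val : ℤ), ?_⟩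
      rw [key (k' - (s.val : ℤ)), sub_add_cancel]
end

section
/- For any high-dimensional periodic sequences S, Q, T ⊆ ℝ × ℝ^d, the oriented elastic metric satisfies the triangle inequality: Elm^o(S,T) ≤ Elm^o(S,Q) + Elm^o(Q,T). -/
section Aux

open Finset

variable {d : ℕ}

lemma natCast_mod_dvd {m n : ℕ} (h : m ∣ n) (a : ℕ) : ((a % n : ℕ) : ZMod m) = (a : ZMod m) := by
  conv_rhs => rw [← Nat.mod_add_div a n]
  push_cast
  rw [(ZMod.natCast_eq_zero_iff n m).mpr h]
  ring

lemma cast_val_hom {N m : ℕ} [NeZero N] (h : m ∣ N) (x : ZMod N) :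
    ((x.val : ℕ) : ZMod m) = ZMod.castHom h (ZMod m) x := by
  rw [ZMod.natCast_val, ZMod.castHom_apply]

lemma cast_val_add {N m : ℕ} [NeZero N] (h : m ∣ N) (j : ZMod N) (s : ℕ) :
    (((j + (s : ZMod N)).val : ℕ) : ZMod m) = ((j.val + s : ℕ) : ZMod m) := by
  rw [cast_val_hom h, map_add, map_natCast, ← cast_val_hom h]
  push_cast
  ring

lemma vproj_natCast {m N : ℕ} [NeZero N] (h : m ∣ N) (S : HSeq d m) (a : ℕ) :
    S.vproj N (a : ZMod N) = (S.p ⟨a % m, Nat.mod_lt _ S.m_pos⟩).2 := by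
  have hv : ((a : ZMod N)).val % m = a % m := by
    rw [ZMod.val_natCast, Nat.mod_mod_of_dvd _ h]
  unfold HSeq.vproj
  congr 2
  exact Fin.ext hv

lemma p2_congr {m : ℕ} (S : HSeq d m) {x y : ℕ} (hx : x < m) (hy : y < m) (h : x = y) :
    (S.p ⟨x, hx⟩).2 = (S.p ⟨y, hy⟩).2 := by subst h; rfl

end Aux

section Main

variable {d : ℕ}

/-- time component of the cost at shift `s`. -/
noncomputable def hdt {m₁ m₂ : ℕ} (S : HSeq d m₁) (Q : HSeq d m₂) (N : ℕ) (hN : N ≠ 0)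
    (s : ℕ) : ℝ :=
  letI : NeZero N := ⟨hN⟩
  Finset.univ.sup' (Finset.univ_nonempty_iff.mpr ⟨0⟩) fun j : ZMod N =>
    |S.DLc N j - Q.DLc N (j + (s : ZMod N))|

/-- value component of the cost at shift `s`. -/
noncomputable def hdv {m₁ m₂ : ℕ} (S : HSeq d m₁) (Q : HSeq d m₂) (N : ℕ) (hN : N ≠ 0)
    (s : ℕ) : NNReal :=
  letI : NeZero N := ⟨hN⟩
  (Finset.Icc 1 (N - 1) ×ˢ (Finset.univ : Finset (ZMod N))).sup
    fun x : ℕ × ZMod N =>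
      Real.nnabs
        (‖S.vproj N x.2 - S.vproj N ((x.1 : ZMod N) + x.2)‖ -
          ‖Q.vproj N (x.2 + (s : ZMod N)) -
            Q.vproj N ((x.1 : ZMod N) + x.2 + (s : ZMod N))‖)

lemma hdt_reduce {m₁ m₂ n N : ℕ} (S : HSeq d m₁) (Q : HSeq d m₂)
    (h₁ : m₁ ∣ n) (h₂ : m₂ ∣ n) (hn : n ∣ N) (hn0 : n ≠ 0) (hN : N ≠ 0) (s : ℕ) :
    hdt S Q N hN s = hdt S Q n hn0 s := by
  letI : NeZero n := ⟨hn0⟩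
  letI : NeZero N := ⟨hN⟩
  have key : ∀ (M : ℕ) [NeZero M], m₂ ∣ M → ∀ j : ZMod M,
      |S.DLc M j - Q.DLc M (j + (s : ZMod M))| =
      |S.DL ((j.val : ZMod m₁)) - Q.DL (((j.val + s : ℕ) : ZMod m₂))| := by
    intro M _ hM₂ j
    show |S.DL ((j.val : ZMod m₁)) - Q.DL (((j + (s : ZMod M)).val : ZMod m₂))| = _
    rw [cast_val_add hM₂ j s]
  unfold hdt
  apply le_antisymm
  · apply Finset.sup'_le
    intro j _
    have h3 : |S.DLc N j - Q.DLc N (j + (s : ZMod N))| =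
        |S.DLc n ((j.val : ℕ) : ZMod n) - Q.DLc n (((j.val : ℕ) : ZMod n) + (s : ZMod n))| := by
      rw [key N (h₂.trans hn) j, key n h₂ ((j.val : ℕ) : ZMod n)]
      rw [ZMod.val_natCast, natCast_mod_dvd h₁]
      have : ((j.val % n + s : ℕ) : ZMod m₂) = ((j.val + s : ℕ) : ZMod m₂) := by
        push_cast
        rw [natCast_mod_dvd h₂]
      rw [this]
    rw [h3]
    exact Finset.le_sup' (fun j : ZMod n => |S.DLc n j - Q.DLc n (j + (s : ZMod n))|)
      (Finset.mem_univ _)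
  · apply Finset.sup'_le
    intro j _
    have hjlt : j.val < N := lt_of_lt_of_le j.val_lt (Nat.le_of_dvd (Nat.pos_of_ne_zero hN) hn)
    have h3 : |S.DLc n j - Q.DLc n (j + (s : ZMod n))| =
        |S.DLc N ((j.val : ℕ) : ZMod N) - Q.DLc N (((j.val : ℕ) : ZMod N) + (s : ZMod N))| := by
      rw [key n h₂ j, key N (h₂.trans hn) ((j.val : ℕ) : ZMod N)]
      rw [ZMod.val_natCast, Nat.mod_eq_of_lt hjlt]
    rw [h3]
    exact Finset.le_sup' (fun j : ZMod N => |S.DLc N j - Q.DLc N (j + (s : ZMod N))|)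
      (Finset.mem_univ _)

lemma hdt_tri {m₁ m₂ m₃ : ℕ} (S : HSeq d m₁) (Q : HSeq d m₂) (T : HSeq d m₃)
    (N : ℕ) (hN : N ≠ 0) (s₁ s₂ : ℕ) :
    hdt S T N hN (s₁ + s₂) ≤ hdt S Q N hN s₁ + hdt Q T N hN s₂ := by
  letI : NeZero N := ⟨hN⟩
  unfold hdt
  apply Finset.sup'_le
  intro j _
  have e : j + ((s₁ + s₂ : ℕ) : ZMod N) = (j + (s₁ : ZMod N)) + (s₂ : ZMod N) := by
    push_cast; ring
  rw [e]
  refine (abs_sub_le _ (Q.DLc N (j + (s₁ : ZMod N))) _).trans (add_le_add ?_ ?_)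
  · exact Finset.le_sup' (fun j : ZMod N => |S.DLc N j - Q.DLc N (j + (s₁ : ZMod N))|)
      (Finset.mem_univ j)
  · exact Finset.le_sup' (fun j : ZMod N => |Q.DLc N j - T.DLc N (j + (s₂ : ZMod N))|)
      (Finset.mem_univ (j + (s₁ : ZMod N)))

end Main

section Main2

variable {d : ℕ}

lemma keyv {m₁ m₂ M : ℕ} [NeZero M] (hM₁ : m₁ ∣ M) (hM₂ : m₂ ∣ M)
    (S : HSeq d m₁) (Q : HSeq d m₂) (s i : ℕ) (j : ZMod M) :
    Real.nnabs
      (‖S.vproj M j - S.vproj M ((i : ZMod M) + j)‖ -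
        ‖Q.vproj M (j + (s : ZMod M)) - Q.vproj M ((i : ZMod M) + j + (s : ZMod M))‖) =
    Real.nnabs
      (‖(S.p ⟨j.val % m₁, Nat.mod_lt _ S.m_pos⟩).2 -
          (S.p ⟨(i + j.val) % m₁, Nat.mod_lt _ S.m_pos⟩).2‖ -
        ‖(Q.p ⟨(j.val + s) % m₂, Nat.mod_lt _ Q.m_pos⟩).2 -
          (Q.p ⟨(i + j.val + s) % m₂, Nat.mod_lt _ Q.m_pos⟩).2‖) := by
  have a1 : S.vproj M j = (S.p ⟨j.val % m₁, Nat.mod_lt _ S.m_pos⟩).2 := by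
    conv_lhs => rw [← ZMod.natCast_zmod_val j]
    exact vproj_natCast hM₁ S j.val
  have a2 : S.vproj M ((i : ZMod M) + j) =
      (S.p ⟨(i + j.val) % m₁, Nat.mod_lt _ S.m_pos⟩).2 := by
    have e : (i : ZMod M) + j = ((i + j.val : ℕ) : ZMod M) := by
      push_cast; rw [ZMod.natCast_zmod_val]
    rw [e, vproj_natCast hM₁]
  have a3 : Q.vproj M (j + (s : ZMod M)) =
      (Q.p ⟨(j.val + s) % m₂, Nat.mod_lt _ Q.m_pos⟩).2 := by
    have e : j + (s : ZMod M) = ((j.val + s : ℕ) : ZMod M) := by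
      push_cast; rw [ZMod.natCast_zmod_val]
    rw [e, vproj_natCast hM₂]
  have a4 : Q.vproj M ((i : ZMod M) + j + (s : ZMod M)) =
      (Q.p ⟨(i + j.val + s) % m₂, Nat.mod_lt _ Q.m_pos⟩).2 := by
    have e : (i : ZMod M) + j + (s : ZMod M) = ((i + j.val + s : ℕ) : ZMod M) := by
      push_cast; rw [ZMod.natCast_zmod_val]
    rw [e, vproj_natCast hM₂]
  rw [a1, a2, a3, a4]

lemma hdv_reduce {m₁ m₂ n N : ℕ} (S : HSeq d m₁) (Q : HSeq d m₂)
    (h₁ : m₁ ∣ n) (h₂ : m₂ ∣ n) (hn : n ∣ N) (hn0 : n ≠ 0) (hN : N ≠ 0) (s : ℕ) :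
    hdv S Q N hN s = hdv S Q n hn0 s := by
  letI : NeZero n := ⟨hn0⟩
  letI : NeZero N := ⟨hN⟩
  have hnN : n ≤ N := Nat.le_of_dvd (Nat.pos_of_ne_zero hN) hn
  unfold hdv
  apply le_antisymm
  · apply Finset.sup_le
    rintro ⟨i, j⟩ hx
    rw [Finset.mem_product, Finset.mem_Icc] at hx
    rw [keyv (h₁.trans hn) (h₂.trans hn) S Q s i j]
    by_cases h0 : i % n = 0
    · have hi1 : i % m₁ = 0 :=
        Nat.mod_eq_zero_of_dvd (h₁.trans (Nat.dvd_of_mod_eq_zero h0))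
      have hi2 : i % m₂ = 0 :=
        Nat.mod_eq_zero_of_dvd (h₂.trans (Nat.dvd_of_mod_eq_zero h0))
      have c₁ : (i + j.val) % m₁ = j.val % m₁ := by
        rw [Nat.add_mod, hi1, zero_add, Nat.mod_mod_of_dvd _ (dvd_refl m₁)]
      have c₂ : (i + j.val + s) % m₂ = (j.val + s) % m₂ := by
        rw [add_assoc, Nat.add_mod, hi2, zero_add, Nat.mod_mod_of_dvd _ (dvd_refl m₂)]
      rw [p2_congr S (Nat.mod_lt _ S.m_pos) (Nat.mod_lt _ S.m_pos) c₁,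
        p2_congr Q (Nat.mod_lt _ Q.m_pos) (Nat.mod_lt _ Q.m_pos) c₂]
      simp
    · have hmem : (i % n, ((j.val : ℕ) : ZMod n)) ∈
          Finset.Icc 1 (n - 1) ×ˢ (Finset.univ : Finset (ZMod n)) := by
        rw [Finset.mem_product, Finset.mem_Icc]
        exact ⟨⟨Nat.one_le_iff_ne_zero.mpr h0,
          Nat.le_sub_one_of_lt (Nat.mod_lt _ (Nat.pos_of_ne_zero hn0))⟩, Finset.mem_univ _⟩
      refine le_trans (le_of_eq ?_) (Finset.le_sup hmem)
      rw [keyv h₁ h₂ S Q s (i % n) ((j.val : ℕ) : ZMod n)]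
      have v : ((j.val : ℕ) : ZMod n).val = j.val % n := ZMod.val_natCast _ _
      rw [v]
      have b1 : j.val % m₁ = j.val % n % m₁ := (Nat.mod_mod_of_dvd j.val h₁).symm
      have b2 : (i + j.val) % m₁ = (i % n + j.val % n) % m₁ :=
        (((Nat.mod_modEq i n).add (Nat.mod_modEq j.val n)).of_dvd h₁).symm
      have b3 : (j.val + s) % m₂ = (j.val % n + s) % m₂ :=
        (((Nat.mod_modEq j.val n).add_right s).of_dvd h₂).symm
      have b4 : (i + j.val + s) % m₂ = (i % n + j.val % n + s) % m₂ :=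
        ((((Nat.mod_modEq i n).add (Nat.mod_modEq j.val n)).add_right s).of_dvd h₂).symm
      rw [p2_congr S (Nat.mod_lt _ S.m_pos) (Nat.mod_lt _ S.m_pos) b1,
        p2_congr S (Nat.mod_lt _ S.m_pos) (Nat.mod_lt _ S.m_pos) b2,
        p2_congr Q (Nat.mod_lt _ Q.m_pos) (Nat.mod_lt _ Q.m_pos) b3,
        p2_congr Q (Nat.mod_lt _ Q.m_pos) (Nat.mod_lt _ Q.m_pos) b4]
  · apply Finset.sup_le
    rintro ⟨i, j⟩ hx
    rw [Finset.mem_product, Finset.mem_Icc] at hx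
    have hmem : (i, ((j.val : ℕ) : ZMod N)) ∈
        Finset.Icc 1 (N - 1) ×ˢ (Finset.univ : Finset (ZMod N)) := by
      rw [Finset.mem_product, Finset.mem_Icc]
      exact ⟨⟨hx.1.1, hx.1.2.trans (Nat.sub_le_sub_right hnN 1)⟩, Finset.mem_univ _⟩
    refine le_trans (le_of_eq ?_) (Finset.le_sup hmem)
    rw [keyv h₁ h₂ S Q s i j, keyv (h₁.trans hn) (h₂.trans hn) S Q s i ((j.val : ℕ) : ZMod N)]
    have v : ((j.val : ℕ) : ZMod N).val = j.val := by
      rw [ZMod.val_natCast]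
      exact Nat.mod_eq_of_lt (lt_of_lt_of_le j.val_lt hnN)
    rw [v]

end Main2

section Main3

variable {d : ℕ}

set_option maxHeartbeats 1000000 in
lemma hdv_tri {m₁ m₂ m₃ : ℕ} (S : HSeq d m₁) (Q : HSeq d m₂) (T : HSeq d m₃)
    (N : ℕ) (hN : N ≠ 0) (s₁ s₂ : ℕ) :
    hdv S T N hN (s₁ + s₂) ≤ hdv S Q N hN s₁ + hdv Q T N hN s₂ := by
  letI : NeZero N := ⟨hN⟩
  unfold hdv
  apply Finset.sup_le
  rintro ⟨i, j⟩ hx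
  have e1 : j + ((s₁ + s₂ : ℕ) : ZMod N) = (j + (s₁ : ZMod N)) + (s₂ : ZMod N) := by
    push_cast; ring
  have e2 : (i : ZMod N) + j + ((s₁ + s₂ : ℕ) : ZMod N) =
      (i : ZMod N) + (j + (s₁ : ZMod N)) + (s₂ : ZMod N) := by
    push_cast; ring
  rw [e1, e2]
  have tri : ∀ a c : ℝ,
      Real.nnabs (a - c) ≤
        Real.nnabs (a - ‖Q.vproj N (j + (s₁ : ZMod N)) -
            Q.vproj N ((i : ZMod N) + (j + (s₁ : ZMod N)))‖) +
        Real.nnabs (‖Q.vproj N (j + (s₁ : ZMod N)) -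
            Q.vproj N ((i : ZMod N) + (j + (s₁ : ZMod N)))‖ - c) := by
    intro a c
    rw [← NNReal.coe_le_coe, NNReal.coe_add, Real.coe_nnabs, Real.coe_nnabs, Real.coe_nnabs]
    exact abs_sub_le _ _ _
  refine (tri _ _).trans (add_le_add ?_ ?_)
  · have e3 : (i : ZMod N) + (j + (s₁ : ZMod N)) = (i : ZMod N) + j + (s₁ : ZMod N) := by ring
    rw [e3]
    exact Finset.le_sup (f := fun x : ℕ × ZMod N =>
      Real.nnabs
        (‖S.vproj N x.2 - S.vproj N ((x.1 : ZMod N) + x.2)‖ -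
          ‖Q.vproj N (x.2 + (s₁ : ZMod N)) -
            Q.vproj N ((x.1 : ZMod N) + x.2 + (s₁ : ZMod N))‖)) hx
  · have hmem : (i, j + (s₁ : ZMod N)) ∈
        Finset.Icc 1 (N - 1) ×ˢ (Finset.univ : Finset (ZMod N)) := by
      rw [Finset.mem_product] at hx ⊢
      exact ⟨hx.1, Finset.mem_univ _⟩
    have h2 := Finset.le_sup (f := fun x : ℕ × ZMod N =>
      Real.nnabs
        (‖Q.vproj N x.2 - Q.vproj N ((x.1 : ZMod N) + x.2)‖ -
          ‖T.vproj N (x.2 + (s₂ : ZMod N)) -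
            T.vproj N ((x.1 : ZMod N) + x.2 + (s₂ : ZMod N))‖)) hmem
    simp only [] at h2
    exact h2

lemma Elmo_le {m₁ m₂ : ℕ} (S : HSeq d m₁) (Q : HSeq d m₂) (s : ℕ) :
    HSeq.Elmo S Q ≤
      max (hdt S Q (Nat.lcm m₁ m₂) (Nat.lcm_pos S.m_pos Q.m_pos).ne' s)
        ((hdv S Q (Nat.lcm m₁ m₂) (Nat.lcm_pos S.m_pos Q.m_pos).ne' s : NNReal) : ℝ) := by
  letI : NeZero (Nat.lcm m₁ m₂) := ⟨(Nat.lcm_pos S.m_pos Q.m_pos).ne'⟩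
  exact Finset.inf'_le _ (Finset.mem_univ ((s : ZMod (Nat.lcm m₁ m₂))))

lemma Elmo_exists {m₁ m₂ : ℕ} (S : HSeq d m₁) (Q : HSeq d m₂) :
    ∃ s : ℕ,
      HSeq.Elmo S Q =
        max (hdt S Q (Nat.lcm m₁ m₂) (Nat.lcm_pos S.m_pos Q.m_pos).ne' s)
          ((hdv S Q (Nat.lcm m₁ m₂) (Nat.lcm_pos S.m_pos Q.m_pos).ne' s : NNReal) : ℝ) := by
  letI : NeZero (Nat.lcm m₁ m₂) := ⟨(Nat.lcm_pos S.m_pos Q.m_pos).ne'⟩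
  obtain ⟨s₀, -, h⟩ := Finset.exists_mem_eq_inf'
    (s := (Finset.univ : Finset (ZMod (Nat.lcm m₁ m₂))))
    (Finset.univ_nonempty_iff.mpr ⟨0⟩)
    (fun s : ZMod (Nat.lcm m₁ m₂) =>
      max
        (Finset.univ.sup' (Finset.univ_nonempty_iff.mpr ⟨0⟩)
          fun j : ZMod (Nat.lcm m₁ m₂) =>
            |S.DLc (Nat.lcm m₁ m₂) j - Q.DLc (Nat.lcm m₁ m₂) (j + s)|)
        ((((Finset.Icc 1 (Nat.lcm m₁ m₂ - 1) ×ˢ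
            (Finset.univ : Finset (ZMod (Nat.lcm m₁ m₂)))).sup
          fun x : ℕ × ZMod (Nat.lcm m₁ m₂) =>
            Real.nnabs
              (‖S.vproj (Nat.lcm m₁ m₂) x.2 -
                  S.vproj (Nat.lcm m₁ m₂) ((x.1 : ZMod (Nat.lcm m₁ m₂)) + x.2)‖ -
                ‖Q.vproj (Nat.lcm m₁ m₂) (x.2 + s) -
                  Q.vproj (Nat.lcm m₁ m₂) ((x.1 : ZMod (Nat.lcm m₁ m₂)) + x.2 + s)‖)) :
          NNReal) : ℝ))
  refine ⟨s₀.val, ?_⟩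
  have : HSeq.Elmo S Q = _ := h
  rw [this]
  conv_lhs => rw [← ZMod.natCast_zmod_val s₀]
  rfl

end Main3

/-- the oriented elastic metric on high-dimensional periodic sequences
satisfies the triangle inequality. -/
theorem HElmo_triangle {d m₁ m₂ m₃ : ℕ}
    (S : HSeq d m₁) (Q : HSeq d m₂) (T : HSeq d m₃) :
    HSeq.Elmo S T ≤ HSeq.Elmo S Q + HSeq.Elmo Q T := by
  set N := Nat.lcm (Nat.lcm m₁ m₂) (Nat.lcm m₂ m₃) with hNdef
  have hN : N ≠ 0 := by
    have := Nat.lcm_pos (Nat.lcm_pos S.m_pos Q.m_pos) (Nat.lcm_pos Q.m_pos T.m_pos)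
    exact this.ne'
  have h12 : Nat.lcm m₁ m₂ ∣ N := Nat.dvd_lcm_left _ _
  have h23 : Nat.lcm m₂ m₃ ∣ N := Nat.dvd_lcm_right _ _
  have hm1 : m₁ ∣ N := (Nat.dvd_lcm_left m₁ m₂).trans h12
  have hm2 : m₂ ∣ N := (Nat.dvd_lcm_right m₁ m₂).trans h12
  have hm3 : m₃ ∣ N := (Nat.dvd_lcm_right m₂ m₃).trans h23
  have h13 : Nat.lcm m₁ m₃ ∣ N := Nat.lcm_dvd hm1 hm3
  have hn13 : Nat.lcm m₁ m₃ ≠ 0 := (Nat.lcm_pos S.m_pos T.m_pos).ne'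
  have hn12 : Nat.lcm m₁ m₂ ≠ 0 := (Nat.lcm_pos S.m_pos Q.m_pos).ne'
  have hn23 : Nat.lcm m₂ m₃ ≠ 0 := (Nat.lcm_pos Q.m_pos T.m_pos).ne'
  obtain ⟨s₁, e₁⟩ := Elmo_exists S Q
  obtain ⟨s₂, e₂⟩ := Elmo_exists Q T
  calc HSeq.Elmo S T
      ≤ max (hdt S T (Nat.lcm m₁ m₃) hn13 (s₁ + s₂))
          ((hdv S T (Nat.lcm m₁ m₃) hn13 (s₁ + s₂) : NNReal) : ℝ) := Elmo_le S T (s₁ + s₂)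
    _ = max (hdt S T N hN (s₁ + s₂)) ((hdv S T N hN (s₁ + s₂) : NNReal) : ℝ) := by
        rw [hdt_reduce S T (Nat.dvd_lcm_left m₁ m₃) (Nat.dvd_lcm_right m₁ m₃) h13 hn13 hN,
          hdv_reduce S T (Nat.dvd_lcm_left m₁ m₃) (Nat.dvd_lcm_right m₁ m₃) h13 hn13 hN]
    _ ≤ max (hdt S Q N hN s₁) ((hdv S Q N hN s₁ : NNReal) : ℝ) +
        max (hdt Q T N hN s₂) ((hdv Q T N hN s₂ : NNReal) : ℝ) := by
        apply max_le
        · exact (hdt_tri S Q T N hN s₁ s₂).trans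
            (add_le_add (le_max_left _ _) (le_max_left _ _))
        · have h := hdv_tri S Q T N hN s₁ s₂
          have h' : ((hdv S T N hN (s₁ + s₂) : NNReal) : ℝ) ≤
              ((hdv S Q N hN s₁ : NNReal) : ℝ) + ((hdv Q T N hN s₂ : NNReal) : ℝ) := by
            rw [← NNReal.coe_add]
            exact NNReal.coe_le_coe.mpr h
          exact h'.trans (add_le_add (le_max_right _ _) (le_max_right _ _))
    _ = HSeq.Elmo S Q + HSeq.Elmo Q T := by
        rw [e₁, e₂,
          hdt_reduce S Q (Nat.dvd_lcm_left m₁ m₂) (Nat.dvd_lcm_right m₁ m₂) h12 hn12 hN,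
          hdv_reduce S Q (Nat.dvd_lcm_left m₁ m₂) (Nat.dvd_lcm_right m₁ m₂) h12 hn12 hN,
          hdt_reduce Q T (Nat.dvd_lcm_left m₂ m₃) (Nat.dvd_lcm_right m₂ m₃) h23 hn23 hN,
          hdv_reduce Q T (Nat.dvd_lcm_left m₂ m₃) (Nat.dvd_lcm_right m₂ m₃) h23 hn23 hN]
end
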